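/- Let k be a field of characteristic not 2 containing an element i with i² = -1, and let a,b,c ∈ k∖{2,-2}. If κ ∈ k satisfies κ² = (2+a)(2+b)(2+c), then the rational map (x,y) ↦ ((x+1)/(x-1), κ y/(x-1)⁶) maps points of the curve y² = (x⁴+a'x²+1)(x⁴+b'x²+1)(x⁴+c'x²+1) with a' = (12-2a)/(2+a), b' = (12-2b)/(2+b), c' = (12-2c)/(2+c), to points of the curve y² = (x⁴+ax²+1)(x⁴+bx²+1)(x⁴+cx²+1), for all x with x ≠ 1. -/

import Mathlib

set_option maxHeartbeats 2000000 in
theorem stmt5 (k : Type*) [Field k] (hchar : ringChar k ≠ 2)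
    (i : k) (hi : i ^ 2 = -1)
    (a b c : k) (ha : a ≠ 2 ∧ a ≠ -2) (hb : b ≠ 2 ∧ b ≠ -2) (hc : c ≠ 2 ∧ c ≠ -2)
    (κ : k) (hκ : κ ^ 2 = (2 + a) * (2 + b) * (2 + c))
    (a' b' c' : k)
    (ha' : a' = (12 - 2 * a) / (2 + a)) (hb' : b' = (12 - 2 * b) / (2 + b))
    (hc' : c' = (12 - 2 * c) / (2 + c))
    (x y : k) (hx : x ≠ 1)
    (hxy : y ^ 2 = (x ^ 4 + a' * x ^ 2 + 1) * (x ^ 4 + b' * x ^ 2 + 1)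
      * (x ^ 4 + c' * x ^ 2 + 1)) :
    (κ * y / (x - 1) ^ 6) ^ 2
      = (((x + 1) / (x - 1)) ^ 4 + a * ((x + 1) / (x - 1)) ^ 2 + 1)
        * (((x + 1) / (x - 1)) ^ 4 + b * ((x + 1) / (x - 1)) ^ 2 + 1)
        * (((x + 1) / (x - 1)) ^ 4 + c * ((x + 1) / (x - 1)) ^ 2 + 1) := by
  have hx1 : x - 1 ≠ 0 := sub_ne_zero.mpr hx
  have ha2 : (2 : k) + a ≠ 0 := fun h => ha.2 (by linear_combination h)
  have hb2 : (2 : k) + b ≠ 0 := fun h => hb.2 (by linear_combination h)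
  have hc2 : (2 : k) + c ≠ 0 := fun h => hc.2 (by linear_combination h)
  subst ha' hb' hc'
  have key : ∀ t : k, (2 : k) + t ≠ 0 →
      ((x + 1) / (x - 1)) ^ 4 + t * ((x + 1) / (x - 1)) ^ 2 + 1
        = (2 + t) * (x ^ 4 + (12 - 2 * t) / (2 + t) * x ^ 2 + 1) / (x - 1) ^ 4 := by
    intro t ht
    field_simp
    ring
  have lhs : (κ * y / (x - 1) ^ 6) ^ 2 = κ ^ 2 * y ^ 2 / ((x - 1) ^ 6) ^ 2 := by
    rw [div_pow]; ring_nf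
  rw [key a ha2, key b hb2, key c hc2, lhs, hxy, hκ]
  field_simp
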